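/- With the notation of the Davis–Figiel–Johnson–Pełczyński interpolation: if x ∈ PX with ‖x‖ = 1, where P is a norm-one projection satisfying P(W) ⊆ W and P(W) = P(B_X), then for every n, ‖x‖_n = 1/(2^n + 2^{-n}). -/

import Mathlib

open scoped Pointwise

/-- In the DFJP interpolation scheme, if `x ∈ PX` has `‖x‖ = 1`, where `P` is a norm-one
projection with `P(W) ⊆ W` and `P(W) = P(B_X)`, then `‖x‖_n = 1/(2^n + 2^{-n})` for every
`n ≥ 1` (here `N (n+1)` is the norm whose unit ball is the closure of
`2^{n+1}·W + 2^{-(n+1)}·B_X`). -/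
theorem stmt1
    {X : Type*} [NormedAddCommGroup X] [NormedSpace ℝ X] [CompleteSpace X]
    (W : Set X) (hWb : Bornology.IsBounded W) (hWcl : IsClosed W)
    (hWconv : Convex ℝ W) (hWsym : W = -W)
    (N : ℕ → X → ℝ)
    (hNball : ∀ n : ℕ, {x : X | N (n + 1) x ≤ 1}
      = closure (((2 : ℝ) ^ (n + 1)) • W + Metric.closedBall (0 : X) (((2 : ℝ) ^ (n + 1))⁻¹)))
    (hNnorm : ∀ n : ℕ,
      (∀ x y : X, N (n + 1) (x + y) ≤ N (n + 1) x + N (n + 1) y)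
      ∧ (∀ (a : ℝ) (x : X), N (n + 1) (a • x) = |a| * N (n + 1) x)
      ∧ (∀ x : X, 0 ≤ N (n + 1) x)
      ∧ (∀ x : X, N (n + 1) x = 0 → x = 0))
    (P : X →L[ℝ] X) (hPproj : ∀ x, P (P x) = P x) (hPnorm : ‖P‖ ≤ 1)
    (hPW : P '' W ⊆ W) (hPWB : P '' W = P '' Metric.closedBall (0 : X) 1) :
    ∀ x ∈ Set.range P, ‖x‖ = 1 → ∀ n : ℕ,
      N (n + 1) x = ((2 : ℝ) ^ (n + 1) + ((2 : ℝ) ^ (n + 1))⁻¹)⁻¹ := by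
  rintro x ⟨y, hy⟩ hxnorm n
  have hPx : P x = x := by rw [← hy]; exact hPproj y
  set c : ℝ := (2:ℝ)^(n+1) with hc
  have hcpos : 0 < c := by positivity
  have hcinv : 0 < c⁻¹ := by positivity
  have hs : 0 < c + c⁻¹ := by positivity
  obtain ⟨hN1, hN2, hN3, hN4⟩ := hNnorm n
  -- x ∈ W
  have hxW : x ∈ W := by
    have hx1 : x ∈ Metric.closedBall (0:X) 1 := by
      simp [Metric.mem_closedBall, dist_zero_right, hxnorm]
    have : x ∈ P '' Metric.closedBall (0:X) 1 := ⟨x, hx1, hPx⟩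
    rw [← hPWB] at this
    exact hPW this
  -- upper bound
  have hmem : (c + c⁻¹) • x ∈ {z : X | N (n+1) z ≤ 1} := by
    rw [hNball n]
    apply subset_closure
    have h1 : c • x ∈ (c : ℝ) • W := Set.smul_mem_smul_set hxW
    have h2 : c⁻¹ • x ∈ Metric.closedBall (0:X) c⁻¹ := by
      simp [Metric.mem_closedBall, dist_zero_right, norm_smul, hxnorm, abs_of_pos hcpos]
    have h3 := Set.add_mem_add h1 h2
    rwa [add_smul]
  have hupper : (c + c⁻¹) * N (n+1) x ≤ 1 := by
    have h := hmem
    rw [Set.mem_setOf_eq, hN2] at h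
    rwa [abs_of_pos hs] at h
  -- every z with N z ≤ 1 has ‖P z‖ ≤ c + c⁻¹
  have hkey : ∀ z : X, N (n+1) z ≤ 1 → ‖P z‖ ≤ c + c⁻¹ := by
    intro z hz
    have hz' : z ∈ closure ((c : ℝ) • W + Metric.closedBall (0:X) c⁻¹) := by
      rw [← hNball n]; exact hz
    have hsub : (c : ℝ) • W + Metric.closedBall (0:X) c⁻¹
        ⊆ P ⁻¹' Metric.closedBall (0:X) (c + c⁻¹) := by
      rintro _ ⟨_, ⟨w, hw, rfl⟩, b, hb, rfl⟩
      simp only [Set.mem_preimage, Metric.mem_closedBall, dist_zero_right, map_add, map_smul]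
      have hPw : ‖P w‖ ≤ 1 := by
        have : P w ∈ P '' Metric.closedBall (0:X) 1 := by
          rw [← hPWB]; exact ⟨w, hw, rfl⟩
        obtain ⟨b', hb', hb'eq⟩ := this
        have hb'n : ‖b'‖ ≤ 1 := by
          simpa [Metric.mem_closedBall, dist_zero_right] using hb'
        calc ‖P w‖ = ‖P b'‖ := by rw [hb'eq]
          _ ≤ ‖P‖ * ‖b'‖ := P.le_opNorm b'
          _ ≤ 1 * 1 := mul_le_mul hPnorm hb'n (norm_nonneg _) zero_le_one
          _ = 1 := one_mul 1
      have hbn : ‖b‖ ≤ c⁻¹ := by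
        simpa [Metric.mem_closedBall, dist_zero_right] using hb
      have hPb : ‖P b‖ ≤ c⁻¹ := by
        calc ‖P b‖ ≤ ‖P‖ * ‖b‖ := P.le_opNorm b
          _ ≤ 1 * c⁻¹ := mul_le_mul hPnorm hbn (norm_nonneg _) zero_le_one
          _ = c⁻¹ := one_mul _
      calc ‖c • P w + P b‖ ≤ ‖c • P w‖ + ‖P b‖ := norm_add_le _ _
        _ = c * ‖P w‖ + ‖P b‖ := by rw [norm_smul, Real.norm_eq_abs, abs_of_pos hcpos]
        _ ≤ c * 1 + c⁻¹ := add_le_add (mul_le_mul_of_nonneg_left hPw hcpos.le) hPb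
        _ = c + c⁻¹ := by ring
    have hclosed : IsClosed (P ⁻¹' Metric.closedBall (0:X) (c + c⁻¹)) :=
      Metric.isClosed_closedBall.preimage P.continuous
    have := (closure_minimal hsub hclosed) hz'
    simpa [Metric.mem_closedBall, dist_zero_right] using this
  have ht0 : 0 < N (n+1) x := by
    rcases (hN3 x).lt_or_eq with h | h
    · exact h
    · exfalso
      have hx0 := hN4 x h.symm
      rw [hx0] at hxnorm
      simp at hxnorm
  -- lower bound
  have hlow : (N (n+1) x)⁻¹ ≤ c + c⁻¹ := by
    have h1 : N (n+1) ((N (n+1) x)⁻¹ • x) ≤ 1 := by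
      rw [hN2, abs_of_pos (inv_pos.mpr ht0), inv_mul_cancel₀ ht0.ne']
    have h2 := hkey _ h1
    rw [map_smul, hPx, norm_smul, Real.norm_eq_abs, abs_of_pos (inv_pos.mpr ht0),
      hxnorm, mul_one] at h2
    exact h2
  apply le_antisymm
  · rw [← mul_le_mul_iff_right₀ hs, mul_inv_cancel₀ hs.ne', mul_comm]
    rwa [mul_comm] at hupper
  · rw [← inv_inv (N (n+1) x)]
    exact inv_anti₀ (by positivity) hlow
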